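/- Let q_K > 1 and g_K be real numbers and let ζ_K(s) be a meromorphic function satisfying the functional equation ζ_K(s) = q_K^{(g_K - 1)(1 - 2s)}·ζ_K(1-s), with Laurent expansion ζ_K(s) = c_{-1}/(s-1) + c_0 + O(s-1) at s = 1, c_{-1} ≠ 0, and set γ_K := c_0/c_{-1}. Let f, q∞ > 0 and define ζ_O(s) := q_K^{(g_K-1)(1-2s)}·(1 - q∞^{-f s})·ζ_K(1-s). Then ζ_O(0) ≠ 0 and the logarithmic derivative at s = 0 is ζ_O'(0)/ζ_O(0) = -[ 2(g_K - 1)·ln q_K + (f/2)·ln q∞ + γ_K ]. -/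

import Mathlib

open Filter Topology

/-- Logarithmic derivative at `s = 0` of `ζ_O(s) = q_K^{(g_K-1)(1-2s)}(1-q∞^{-fs})ζ_K(1-s)`,
where `ζ_K` satisfies the functional equation `ζ_K(s) = q_K^{(g_K-1)(1-2s)}ζ_K(1-s)` and
has Laurent expansion `c₋₁/(s-1) + c₀ + O(s-1)` at `s = 1`: the (extended) function
satisfies `ζ_O(0) ≠ 0` and `ζ_O'(0)/ζ_O(0) = -[2(g_K-1)ln q_K + (f/2)ln q∞ + γ_K]`
with `γ_K = c₀/c₋₁`. -/
theorem stmt_11 (qK qinf : ℝ) (hqK : 1 < qK) (hqinf : 1 < qinf)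
    (gK f : ℝ) (hf : 0 < f)
    (ζK : ℂ → ℂ) (cneg cz : ℂ) (hc : cneg ≠ 0)
    (h : ℂ → ℂ) (hh : AnalyticAt ℂ h 1) (hh1 : h 1 = cz)
    (hexp : ∀ᶠ s in 𝓝[≠] (1 : ℂ), ζK s = cneg / (s - 1) + h s)
    (hfe : ∀ s : ℂ, ζK s = (qK : ℂ) ^ (((gK : ℂ) - 1) * (1 - 2 * s)) * ζK (1 - s)) :
    ∃ g : ℂ → ℂ, AnalyticAt ℂ g 0 ∧
      (∀ᶠ s in 𝓝[≠] (0 : ℂ), g s =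
        (qK : ℂ) ^ (((gK : ℂ) - 1) * (1 - 2 * s)) *
          (1 - (qinf : ℂ) ^ (-(f : ℂ) * s)) * ζK (1 - s)) ∧
      g 0 ≠ 0 ∧
      deriv g 0 / g 0 =
        -(2 * ((gK : ℂ) - 1) * (Real.log qK : ℂ) + ((f : ℂ) / 2) * (Real.log qinf : ℂ)
            + cz / cneg) := by
  have hqK0 : (0:ℝ) < qK := lt_trans zero_lt_one hqK
  have hqinf0 : (0:ℝ) < qinf := lt_trans zero_lt_one hqinf
  have hqKC : (qK : ℂ) ≠ 0 := by exact_mod_cast hqK0.ne'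
  have hqinfC : (qinf : ℂ) ≠ 0 := by exact_mod_cast hqinf0.ne'
  set L : ℂ := (Real.log qK : ℂ) with hL_def
  set M : ℂ := (Real.log qinf : ℂ) with hM_def
  set c : ℂ := (gK : ℂ) - 1 with hc_def
  set a : ℂ := -((f : ℂ) * M) with ha_def
  have hLqK : Complex.log (qK : ℂ) = L := (Complex.ofReal_log hqK0.le).symm
  have hLqinf : Complex.log (qinf : ℂ) = M := (Complex.ofReal_log hqinf0.le).symm
  have hM0 : M ≠ 0 := by
    simp only [hM_def, ne_eq, Complex.ofReal_eq_zero]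
    exact ne_of_gt (Real.log_pos hqinf)
  have ha : a ≠ 0 := by
    simp only [ha_def, ne_eq, neg_eq_zero, mul_eq_zero, not_or]
    exact ⟨by exact_mod_cast hf.ne', hM0⟩
  -- the factor `F s = 1 - q∞^{-fs}`
  set F : ℂ → ℂ := fun s => 1 - Complex.exp (a * s) with hF_def
  have hF0 : F 0 = 0 := by simp [hF_def]
  have hFeq : ∀ s : ℂ, (1 : ℂ) - (qinf : ℂ) ^ (-(f : ℂ) * s) = F s := by
    intro s
    rw [hF_def, Complex.cpow_def_of_ne_zero hqinfC, hLqinf]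
    rw [ha_def]
    ring_nf
  have hFd : ∀ s : ℂ, HasDerivAt F (-(Complex.exp (a * s) * a)) s := by
    intro s
    have h1 : HasDerivAt (fun s : ℂ => a * s) a s := by
      simpa using (hasDerivAt_id s).const_mul a
    simpa [hF_def] using h1.cexp.const_sub 1
  have hFan : AnalyticAt ℂ F 0 :=
    analyticAt_const.sub ((analyticAt_const.mul analyticAt_id).cexp)
  obtain ⟨p, hp⟩ := id hFan
  -- second Taylor coefficient of `F`
  have hit2 : iteratedDeriv 2 F 0 = -(a * a) := by
    have hd1 : deriv F = fun s => -(Complex.exp (a * s) * a) :=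
      funext fun s => (hFd s).deriv
    have h2 : HasDerivAt (fun s : ℂ => -(Complex.exp (a * s) * a)) (-(a * a)) 0 := by
      have h1 : HasDerivAt (fun s : ℂ => a * s) a 0 := by
        simpa using (hasDerivAt_id (0:ℂ)).const_mul a
      have := (h1.cexp.mul_const a).neg
      exact (by simpa using this : HasDerivAt (-fun y => Complex.exp (a * y) * a) (-(a * a)) 0)
    rw [iteratedDeriv_succ, iteratedDeriv_one, hd1]
    exact h2.deriv
  have hcoeff2 : p.coeff 2 = -(a * a) / 2 := by
    obtain ⟨r, hpr⟩ := id hp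
    have hfac := hpr.factorial_smul (1 : ℂ) 2
    have h2 : ((Nat.factorial 2 : ℕ) : ℂ) * p.coeff 2 = iteratedDeriv 2 F 0 := by
      rw [iteratedDeriv_eq_iteratedFDeriv, ← hfac, nsmul_eq_mul]
      rfl
    rw [hit2] at h2
    norm_num [Nat.factorial] at h2
    linear_combination h2 / 2
  -- the analytic extension `E` of `F s / s`
  set E : ℂ → ℂ := dslope F 0 with hE_def
  have hqE : HasFPowerSeriesAt E p.fslope 0 := hp.has_fpower_series_dslope_fslope
  have hEan : AnalyticAt ℂ E 0 := ⟨p.fslope, hqE⟩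
  have hE0 : E 0 = -a := by
    rw [hE_def, dslope_same]
    simpa using (hFd 0).deriv
  have hE' : deriv E 0 = -(a * a) / 2 := by
    rw [hqE.deriv]
    exact FormalMultilinearSeries.coeff_fslope.trans hcoeff2
  -- the exponential factor `P`
  set P : ℂ → ℂ := fun s => Complex.exp (L * (c * (1 - 2 * s))) with hP_def
  have hPeq : ∀ s : ℂ, (qK : ℂ) ^ (c * (1 - 2 * s)) = P s := by
    intro s
    rw [hP_def, Complex.cpow_def_of_ne_zero hqKC, hLqK]
  have hP0 : P 0 ≠ 0 := Complex.exp_ne_zero _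
  have hPd : HasDerivAt P (P 0 * (-(2 * c * L))) 0 := by
    have h1 : HasDerivAt (fun s : ℂ => L * (c * (1 - 2 * s))) (-(2 * c * L)) 0 := by
      have h0 : HasDerivAt (fun s : ℂ => 1 - 2 * s) (-2 : ℂ) 0 := by
        simpa using ((hasDerivAt_id (0:ℂ)).const_mul (2:ℂ)).const_sub 1
      have := (h0.const_mul c).const_mul L
      exact this.congr_deriv (by ring)
    have := h1.cexp
    convert this using 1
  have hPan : AnalyticAt ℂ P 0 :=
    (analyticAt_const.mul (analyticAt_const.mul
      (analyticAt_const.sub (analyticAt_const.mul analyticAt_id)))).cexp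
  -- the function `g`
  refine ⟨fun s => P s * (-cneg * E s + F s * h (1 - s)), ?_, ?_, ?_, ?_⟩
  · have hinner : AnalyticAt ℂ (fun s : ℂ => 1 - s) 0 := analyticAt_const.sub analyticAt_id
    have hh' : AnalyticAt ℂ h ((fun s : ℂ => 1 - s) 0) := by simpa using hh
    have hcomp : AnalyticAt ℂ (fun s : ℂ => h (1 - s)) 0 := hh'.comp hinner
    exact hPan.mul ((analyticAt_const.mul hEan).add (hFan.mul hcomp))
  · -- eventual equality on the punctured neighbourhood
    have hmaps : Tendsto (fun s : ℂ => 1 - s) (𝓝[≠] (0:ℂ)) (𝓝[≠] (1:ℂ)) := by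
      rw [tendsto_nhdsWithin_iff]
      constructor
      · have : Tendsto (fun s : ℂ => 1 - s) (𝓝 (0:ℂ)) (𝓝 (1 - 0 : ℂ)) :=
          (continuous_const.sub continuous_id).tendsto 0
        simpa using this.mono_left nhdsWithin_le_nhds
      · filter_upwards [self_mem_nhdsWithin] with s hs
        simp only [Set.mem_compl_iff, Set.mem_singleton_iff] at hs ⊢
        simpa [sub_eq_self] using hs
    filter_upwards [hmaps.eventually hexp, self_mem_nhdsWithin] with s hz hs
    simp only [Set.mem_compl_iff, Set.mem_singleton_iff] at hs
    rw [hz, hPeq, hFeq, hE_def, dslope_of_ne F hs, slope_def_field, hF0]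
    have h1s : (1 : ℂ) - s - 1 = -s := by ring
    rw [h1s]
    have hs' : s ≠ 0 := hs
    field_simp [hs']
    ring
  · -- nonvanishing at `0`
    show P 0 * (-cneg * E 0 + F 0 * h (1 - 0)) ≠ 0
    have : P 0 * (-cneg * E 0 + F 0 * h (1 - 0)) = P 0 * (cneg * a) := by
      rw [hE0, hF0]; ring
    rw [this]
    exact mul_ne_zero hP0 (mul_ne_zero hc ha)
  · -- the logarithmic derivative
    have hhd : HasDerivAt (fun s : ℂ => h (1 - s)) (-(deriv h 1)) 0 := by
      have hd : HasDerivAt h (deriv h 1) (1 - (0:ℂ)) := by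
        simpa using hh.differentiableAt.hasDerivAt
      have h0 : HasDerivAt (fun s : ℂ => 1 - s) (-1 : ℂ) 0 := by
        simpa using (hasDerivAt_id (0:ℂ)).const_sub 1
      have := HasDerivAt.comp (x := (0:ℂ)) hd h0
      exact (by simpa [Function.comp, mul_neg_one] using this :
        HasDerivAt (h ∘ HSub.hSub 1) (-(deriv h 1)) 0)
    have hEd : HasDerivAt E (deriv E 0) 0 := hEan.differentiableAt.hasDerivAt
    have hQd : HasDerivAt (fun s => -cneg * E s + F s * h (1 - s))
        (-cneg * deriv E 0 + ((-(Complex.exp (a * 0) * a)) * h (1 - 0) + F 0 * (-(deriv h 1)))) 0 :=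
      (hEd.const_mul (-cneg)).add ((hFd 0).mul hhd)
    have hgd : HasDerivAt (fun s => P s * (-cneg * E s + F s * h (1 - s))) _ 0 := hPd.mul hQd
    have e4 : h (1 - (0:ℂ)) = cz := by simpa using hh1
    have hg0 : (fun s => P s * (-cneg * E s + F s * h (1 - s))) 0
        = P 0 * (-cneg * E 0 + F 0 * h (1 - 0)) := rfl
    rw [hgd.deriv, hg0, hF0, hE0, hE', e4]
    have hexp0 : Complex.exp (a * 0) = 1 := by simp
    rw [hexp0]
    have hden : P 0 * (-cneg * -a + 0 * cz) = P 0 * (cneg * a) := by ring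
    rw [hden, div_eq_iff (mul_ne_zero hP0 (mul_ne_zero hc ha)), ha_def]
    field_simp [hc]
    ring
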